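/- Let u be a polynomial function on ℝ^d of total degree at most n. Suppose the weighted moment matrix A = Σ_j w_j p(r_j) p(r_j)ᵀ is invertible, where p(r) is the vector of monomials r^β/β! over multi-indices β with 1 ≤ |β| ≤ n and r_j = x_j - x_i. Then the discrete nonlocal operator A⁻¹ Σ_j w_j (u(x_j) - u(x_i)) p(r_j) equals the vector of exact partial derivatives (∂^β u(x_i))_{1 ≤ |β| ≤ n}. -/

import Mathlib

open Matrix
open MvPolynomial Finsupp

/-- Iterated partial derivative `∂^β` of a multivariate polynomial. -/
noncomputable def pderivPow {d : ℕ} (β : Fin d → ℕ) :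
    MvPolynomial (Fin d) ℝ →ₗ[ℝ] MvPolynomial (Fin d) ℝ :=
  (List.ofFn fun i : Fin d => ((MvPolynomial.pderiv i).toLinearMap ^ β i)).prod

lemma pderiv_pow_monomial {d : ℕ} (i : Fin d) (k : ℕ) (α : (Fin d) →₀ ℕ) (c : ℝ) :
    ((pderiv i).toLinearMap ^ k) (monomial α c)
      = monomial (α - single i k) (c * (α i).descFactorial k) := by
  induction k generalizing α c with
  | zero => simp
  | succ k ih =>
    rw [pow_succ, Module.End.mul_apply]
    erw [pderiv_monomial]
    rw [ih]
    congr 1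
    · rw [tsub_tsub, ← Finsupp.single_add, add_comm]
    · rw [Finsupp.tsub_apply, Finsupp.single_eq_same]
      have h : (α i) * ((α i - 1).descFactorial k) = (α i).descFactorial (k+1) := by
        cases h : α i with
        | zero => simp
        | succ m => rw [Nat.succ_sub_one, Nat.succ_descFactorial_succ]
      rw [mul_assoc, ← Nat.cast_mul, h]

lemma prod_ofFn_monomial {d : ℕ} : ∀ (m : ℕ) (g : Fin m → Fin d), Function.Injective g →
    ∀ (β : Fin m → ℕ) (α : (Fin d) →₀ ℕ) (c : ℝ),
    (List.ofFn fun i : Fin m => ((pderiv (g i)).toLinearMap ^ β i)).prod (monomial α c)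
      = monomial (α - ∑ i, single (g i) (β i)) (c * ∏ i, (α (g i)).descFactorial (β i)) := by
  intro m
  induction m with
  | zero => simp
  | succ m ih =>
    intro g hg β α c
    rw [List.ofFn_succ, List.prod_cons, Module.End.mul_apply,
      ih (fun i => g i.succ) (fun a b h => Fin.succ_injective m (hg h)) (fun i => β i.succ) α c]
    rw [pderiv_pow_monomial]
    have hz : (∑ i : Fin m, single (g ((Fin.succ) i)) (β (Fin.succ i))) (g 0) = 0 := by
      rw [Finsupp.finset_sum_apply]
      apply Finset.sum_eq_zero
      intro i _
      exact Finsupp.single_eq_of_ne (fun h => (Fin.succ_ne_zero i) (hg h.symm))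
    congr 1
    · rw [tsub_tsub, Fin.sum_univ_succ, add_comm]
    · rw [Fin.prod_univ_succ, Finsupp.tsub_apply, hz, Nat.sub_zero]
      push_cast
      ring

lemma pderivPow_monomial {d : ℕ} (β : Fin d → ℕ) (α : (Fin d) →₀ ℕ) (c : ℝ) :
    pderivPow β (monomial α c)
      = monomial (α - ∑ i, single i (β i)) (c * ∏ i, (α i).descFactorial (β i)) :=
  prod_ofFn_monomial d id Function.injective_id β α c

lemma binom (n m : ℕ) (hm : m ≤ n) (a b : ℝ) :
    (a + b) ^ m = ∑ k : Fin (n+1), ((m.choose k : ℝ) * a ^ (m - (k:ℕ)) * b ^ (k:ℕ)) := by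
  have h1 : (a + b) ^ m = ∑ k ∈ Finset.range (n+1), b ^ k * a ^ (m - k) * (m.choose k : ℝ) := by
    rw [add_comm a b, add_pow]
    apply Finset.sum_subset (Finset.range_subset_range.mpr (Nat.succ_le_succ hm))
    intro k _ hk
    have hk' : m < k := by simpa using hk
    simp [Nat.choose_eq_zero_of_lt hk']
  rw [h1, ← Fin.sum_univ_eq_sum_range (fun k => b ^ k * a ^ (m - k) * (m.choose k : ℝ)) (n+1)]
  exact Finset.sum_congr rfl fun k _ => by ring

lemma sum_single_apply {d n : ℕ} (β : Fin d → Fin (n+1)) (i : Fin d) :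
    (∑ j, single j ((β j : ℕ))) i = (β i : ℕ) := by
  rw [Finsupp.finset_sum_apply]
  simp [Finsupp.single_apply]

lemma taylor_monomial {d n : ℕ} (α : (Fin d) →₀ ℕ) (hα : (α.sum fun _ e => e) ≤ n)
    (c : ℝ) (x r : Fin d → ℝ) :
    eval (x + r) (monomial α c) = ∑ β : Fin d → Fin (n+1),
      eval x (pderivPow (fun i => (β i : ℕ)) (monomial α c))
        * ((∏ i, r i ^ (β i : ℕ)) / ((∏ i, Nat.factorial (β i) : ℕ) : ℝ)) := by
  have hle : ∀ i, α i ≤ n := by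
    intro i
    refine le_trans ?_ hα
    by_cases h : i ∈ α.support
    · exact Finset.single_le_sum (f := fun j => α j) (fun _ _ => Nat.zero_le _) h
    · simp [Finsupp.notMem_support_iff.mp h]
  rw [eval_monomial, Finsupp.prod_pow]
  have lhs : (c * ∏ i, (x + r) i ^ α i)
      = c * ∑ β : Fin d → Fin (n+1), ∏ i,
          (((α i).choose (β i) : ℝ) * x i ^ (α i - (β i : ℕ)) * r i ^ (β i : ℕ)) := by
    congr 1
    rw [← Fintype.prod_sum (fun (i : Fin d) (k : Fin (n+1)) =>
      (((α i).choose (k : ℕ) : ℝ) * x i ^ (α i - (k : ℕ)) * r i ^ (k : ℕ)))]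
    exact Finset.prod_congr rfl fun i _ => by
      rw [Pi.add_apply, binom n (α i) (hle i)]
  rw [lhs, Finset.mul_sum]
  apply Finset.sum_congr rfl
  intro β _
  rw [pderivPow_monomial, eval_monomial, Finsupp.prod_pow]
  have hexp : ∀ i, (α - ∑ j, Finsupp.single j ((β j : ℕ))) i = α i - (β i : ℕ) := by
    intro i; rw [Finsupp.tsub_apply, sum_single_apply]
  have hx : (∏ i, x i ^ (α - ∑ j, Finsupp.single j ((β j : ℕ))) i)
      = ∏ i, x i ^ (α i - (β i : ℕ)) := by
    exact Finset.prod_congr rfl fun i _ => by rw [hexp i]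
  rw [hx]
  have hdesc : (∏ i, (α i).descFactorial ((β i : ℕ)))
      = (∏ i, Nat.factorial ((β i : ℕ))) * ∏ i, (α i).choose ((β i : ℕ)) := by
    rw [← Finset.prod_mul_distrib]
    exact Finset.prod_congr rfl fun i _ => Nat.descFactorial_eq_factorial_mul_choose _ _
  have hfact : ((∏ i, Nat.factorial ((β i : ℕ)) : ℕ) : ℝ) ≠ 0 := by
    positivity
  rw [hdesc]
  push_cast
  rw [Finset.prod_mul_distrib, Finset.prod_mul_distrib]
  field_simp

lemma taylor_poly {d n : ℕ} (u : MvPolynomial (Fin d) ℝ) (hu : u.totalDegree ≤ n)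
    (x r : Fin d → ℝ) :
    eval (x + r) u = ∑ β : Fin d → Fin (n+1),
      eval x (pderivPow (fun i => (β i : ℕ)) u)
        * ((∏ i, r i ^ (β i : ℕ)) / ((∏ i, Nat.factorial (β i) : ℕ) : ℝ)) := by
  conv_lhs => rw [← support_sum_monomial_coeff u]
  rw [map_sum,
    Finset.sum_congr rfl (fun α hα => taylor_monomial α (le_trans (le_totalDegree hα) hu)
      (coeff α u) x r),
    Finset.sum_comm]
  apply Finset.sum_congr rfl
  intro β _
  rw [← Finset.sum_mul]
  congr 1
  rw [← map_sum, ← map_sum, support_sum_monomial_coeff]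

lemma pderivPow_zero_apply {d : ℕ} (u : MvPolynomial (Fin d) ℝ) :
    pderivPow (fun _ : Fin d => 0) u = u := by
  have : pderivPow (fun _ : Fin d => 0) = 1 := by
    unfold pderivPow
    apply List.prod_eq_one
    intro y hy
    obtain ⟨i, rfl⟩ := List.mem_ofFn.mp hy
    exact pow_zero _
  rw [this]; rfl

lemma pderivPow_eval_zero {d n : ℕ} (u : MvPolynomial (Fin d) ℝ) (hu : u.totalDegree ≤ n)
    (β : Fin d → ℕ) (hβ : n < ∑ i, β i) : pderivPow β u = 0 := by
  conv_lhs => rw [← support_sum_monomial_coeff u, map_sum]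
  apply Finset.sum_eq_zero
  intro α hα
  rw [pderivPow_monomial]
  have : ∃ i, α i < β i := by
    by_contra h
    push_neg at h
    have h1 : ∑ i, β i ≤ ∑ i, α i := Finset.sum_le_sum fun i _ => h i
    have h2 : (∑ i, α i) ≤ n := by
      refine le_trans (le_of_eq ?_) (le_trans (le_totalDegree hα) hu)
      rw [Finsupp.sum_fintype]
      simp
    omega
  obtain ⟨i, hi⟩ := this
  have : (∏ j, (α j).descFactorial (β j)) = 0 := by
    apply Finset.prod_eq_zero (Finset.mem_univ i)
    exact Nat.descFactorial_eq_zero_iff_lt.mpr hi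
  rw [this]
  simp

/-- Exact polynomial reproduction of the nonlocal operator method: for a
polynomial `u` of total degree at most `n`, with invertible moment matrix
`A = ∑ⱼ wⱼ p(rⱼ) p(rⱼ)ᵀ` where `p(r) = (r^β/β!)_{1 ≤ |β| ≤ n}` and
`rⱼ = xⱼ - xᵢ`, the discrete nonlocal operator
`A⁻¹ ∑ⱼ wⱼ (u(xⱼ) - u(xᵢ)) p(rⱼ)` equals the vector of exact partial
derivatives `(∂^β u (xᵢ))_{1 ≤ |β| ≤ n}`. -/
theorem stmt_10 (d n N : ℕ) (hd : 0 < d) (hn : 0 < n)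
    (u : MvPolynomial (Fin d) ℝ) (hu : u.totalDegree ≤ n)
    (xi : Fin d → ℝ) (x : Fin N → Fin d → ℝ)
    (w : Fin N → ℝ) (hw : ∀ j, 0 < w j) :
    -- index set of multi-indices β with 1 ≤ |β| ≤ n
    let I := {β : Fin d → Fin (n + 1) //
      1 ≤ ∑ i, (β i : ℕ) ∧ ∑ i, (β i : ℕ) ≤ n}
    -- the vector of scaled monomials p(r)
    let pvec : (Fin d → ℝ) → I → ℝ := fun r β =>
      (∏ i, r i ^ (β.1 i : ℕ)) / (∏ i, Nat.factorial (β.1 i) : ℕ)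
    let A : Matrix I I ℝ :=
      ∑ j, w j • vecMulVec (pvec (x j - xi)) (pvec (x j - xi))
    ∀ _hA : IsUnit A,
      A⁻¹ *ᵥ (∑ j, (w j * (MvPolynomial.eval (x j) u
            - MvPolynomial.eval xi u)) • pvec (x j - xi))
        = fun β : I =>
            MvPolynomial.eval xi (pderivPow (fun i => (β.1 i : ℕ)) u) := by
  intro I pvec A hA
  classical
  set D : I → ℝ := fun β => MvPolynomial.eval xi (pderivPow (fun i => (β.1 i : ℕ)) u) with hD
  have hApvec : ∀ (r : Fin d → ℝ) (β : I),
      pvec r β = (∏ i, r i ^ (β.1 i : ℕ)) / ((∏ i, Nat.factorial (β.1 i) : ℕ) : ℝ) :=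
    fun r β => rfl
  have hT : ∀ j : Fin N, (∑ β : I, pvec (x j - xi) β * D β)
      = MvPolynomial.eval (x j) u - MvPolynomial.eval xi u := by
    intro j
    have h0 : xi + (x j - xi) = x j := by funext i; simp
    have ht := taylor_poly u hu xi (x j - xi)
    rw [h0] at ht
    set T : (Fin d → Fin (n+1)) → ℝ := fun β =>
      MvPolynomial.eval xi (pderivPow (fun i => (β i : ℕ)) u)
        * ((∏ i, (x j - xi) i ^ (β i : ℕ)) / ((∏ i, Nat.factorial (β i) : ℕ) : ℝ)) with hTdef
    have hβ0 : T (fun _ => 0) = MvPolynomial.eval xi u := by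
      simp [hTdef, pderivPow_zero_apply]
    have hsplit : ∑ β : Fin d → Fin (n+1), T β
        = T (fun _ => 0) + ∑ β ∈ Finset.univ.filter
            (fun β : Fin d → Fin (n+1) => 1 ≤ ∑ i, (β i : ℕ) ∧ ∑ i, (β i : ℕ) ≤ n), T β := by
      rw [← Finset.add_sum_erase _ T (Finset.mem_univ (fun _ => 0))]
      congr 1
      refine (Finset.sum_subset ?_ ?_).symm
      · intro β hβ
        rw [Finset.mem_filter] at hβ
        refine Finset.mem_erase.mpr ⟨?_, Finset.mem_univ _⟩
        intro hcon
        have hz : ∑ i, ((β i : ℕ)) = 0 := by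
          rw [hcon]; simp
        have h1 := hβ.2.1
        omega
      · intro β hβ1 hβ2
        rw [Finset.mem_erase] at hβ1
        rw [Finset.mem_filter] at hβ2
        have h1 : 1 ≤ ∑ i, (β i : ℕ) := by
          by_contra hc
          push_neg at hc
          have : ∀ i, β i = 0 := by
            intro i
            have := Finset.sum_eq_zero_iff.mp (Nat.lt_one_iff.mp hc) i (Finset.mem_univ i)
            exact Fin.ext (by simpa using this)
          exact hβ1.1 (funext this)
        have h2 : n < ∑ i, (β i : ℕ) := by
          have hb := hβ2
          simp only [Finset.mem_filter, Finset.mem_univ, true_and, not_and, not_le] at hb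
          exact hb h1
        simp [hTdef, pderivPow_eval_zero u hu _ h2]
    have hsubt : ∑ β ∈ Finset.univ.filter
          (fun β : Fin d → Fin (n+1) => 1 ≤ ∑ i, (β i : ℕ) ∧ ∑ i, (β i : ℕ) ≤ n), T β
        = ∑ β : I, T β.1 := by
      apply Finset.sum_subtype
      intro β
      simp
    have : ∑ β : I, T β.1 = ∑ β : I, pvec (x j - xi) β * D β := by
      apply Finset.sum_congr rfl
      intro β _
      rw [hTdef, hApvec]
      simp only [hD]
      ring
    rw [ht, hsplit, hβ0, hsubt, this]
    ring
  have hAval : A = ∑ j, w j • vecMulVec (pvec (x j - xi)) (pvec (x j - xi)) := rfl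
  have hAD : (∑ j, (w j * (MvPolynomial.eval (x j) u - MvPolynomial.eval xi u))
        • pvec (x j - xi)) = A *ᵥ D := by
    funext γ
    have hlhs : (∑ j, (w j * (MvPolynomial.eval (x j) u - MvPolynomial.eval xi u))
          • pvec (x j - xi)) γ
        = ∑ j, (w j * (MvPolynomial.eval (x j) u - MvPolynomial.eval xi u))
            * pvec (x j - xi) γ := by
      simp [Finset.sum_apply, smul_eq_mul]
    have hrhs : (A *ᵥ D) γ = ∑ β : I, (∑ j, w j * (pvec (x j - xi) γ * pvec (x j - xi) β)) * D β := by
      simp [Matrix.mulVec, dotProduct, hAval, Finset.sum_apply, Matrix.sum_apply,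
        Matrix.smul_apply, vecMulVec_apply, smul_eq_mul]
    have hswap : ∑ β : I, (∑ j, w j * (pvec (x j - xi) γ * pvec (x j - xi) β)) * D β
        = ∑ j, ∑ β : I, w j * (pvec (x j - xi) γ * pvec (x j - xi) β) * D β := by
      rw [← Finset.sum_comm]
      exact Finset.sum_congr rfl fun β _ => Finset.sum_mul _ _ _
    rw [hlhs, hrhs, hswap]
    apply Finset.sum_congr rfl
    intro j _
    have : ∑ β : I, w j * (pvec (x j - xi) γ * pvec (x j - xi) β) * D β
        = w j * pvec (x j - xi) γ * ∑ β : I, pvec (x j - xi) β * D β := by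
      rw [Finset.mul_sum]
      apply Finset.sum_congr rfl
      intro β _
      ring
    rw [this, hT j]
    ring
  rw [hAD, Matrix.mulVec_mulVec,
    Matrix.nonsing_inv_mul A ((Matrix.isUnit_iff_isUnit_det A).mp hA), Matrix.one_mulVec]
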